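/- For every α : Finset Q the following are equivalent: (0) α is tolerable; (1) H_α = G_α; (2) there exists a logical X operator λ with α ∩ λ ∈ S_Z; (3) there exists a logical X operator λ ∈ Z(G_α); (4) for every logical X operator λ, α Δ λ is not tolerable; (5) for every β ∈ S_X, α Δ β is tolerable. (Lemma 2, characterizations of tolerable errors.) -/

import Mathlib

open Finset
open scoped symmDiff Matrix

namespace CC

variable {Q : Type*} [Fintype Q] [DecidableEq Q]

/-- A subgroup of the abelian group `(Finset Q, ∆)`. -/
def IsSubgroup (S : Set (Finset Q)) : Prop :=
  ∅ ∈ S ∧ ∀ a ∈ S, ∀ b ∈ S, a ∆ b ∈ S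

/-- The subgroup of `(Finset Q, ∆)` generated by a set. -/
def closure (T : Set (Finset Q)) : Set (Finset Q) :=
  ⋂₀ {S : Set (Finset Q) | IsSubgroup S ∧ T ⊆ S}

/-- A CSS stabilizer code on the qubits `Q`. -/
structure CSS (Q : Type*) [Fintype Q] [DecidableEq Q] where
  SX : Set (Finset Q)
  SZ : Set (Finset Q)
  hSX : IsSubgroup SX
  hSZ : IsSubgroup SZ
  comm : ∀ a ∈ SZ, ∀ b ∈ SX, 2 ∣ (a ∩ b).card

def ZX (C : CSS Q) : Set (Finset Q) := {γ | ∀ f ∈ C.SZ, 2 ∣ (γ ∩ f).card}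

def ZZ (C : CSS Q) : Set (Finset Q) := {z | ∀ c ∈ C.SX, 2 ∣ (z ∩ c).card}

/-- Duality assumption. -/
def Dual (C : CSS Q) : Prop :=
  C.SZ = {z | ∀ γ ∈ ZX C, 2 ∣ (z ∩ γ).card} ∧
  C.SX = {c | ∀ z ∈ ZZ C, 2 ∣ (c ∩ z).card}

def LogicalX (C : CSS Q) (l : Finset Q) : Prop := l ∈ ZX C ∧ l ∉ C.SX

def LogicalZ (C : CSS Q) (l : Finset Q) : Prop := l ∈ ZZ C ∧ l ∉ C.SZ

/-- Single-logical-qubit assumption. -/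
def SingleQubit (C : CSS Q) : Prop :=
  (ZX C ≠ C.SX ∧ ∀ l l', LogicalX C l → LogicalX C l' → l ∆ l' ∈ C.SX) ∧
  (ZZ C ≠ C.SZ ∧ ∀ l l', LogicalZ C l → LogicalZ C l' → l ∆ l' ∈ C.SZ)

/-- Intersection axiom. -/
def Inter (C : CSS Q) : Prop :=
  ZZ C = {x | ∃ α ∈ ZX C, ∃ β ∈ ZX C, x = α ∩ β}

def G (C : CSS Q) (α : Finset Q) : Set (Finset Q) :=
  closure (C.SZ ∪ {x | ∃ β ∈ ZX C, x = α ∩ β})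

def H (C : CSS Q) (α : Finset Q) : Set (Finset Q) :=
  closure (C.SZ ∪ {x | ∃ β ∈ C.SX, x = α ∩ β})

def Zof (K : Set (Finset Q)) : Set (Finset Q) := {γ | ∀ h ∈ K, 2 ∣ (γ ∩ h).card}

def Tolerable (C : CSS Q) (α : Finset Q) : Prop := ∀ z ∈ G C α, ¬ LogicalZ C z

def g (b : Q → ℤ) (s : Finset Q) : ℤ := ∑ q ∈ s, b q

/-- T-invariance assumption. -/
def TInv (C : CSS Q) (b : Q → ℤ) : Prop :=
  (∀ β ∈ C.SX, (8 : ℤ) ∣ g b β) ∧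
  (∀ β ∈ C.SX, ∀ γ ∈ ZX C, (8 : ℤ) ∣ (g b β - 2 * g b (γ ∩ β)))

def E (C : CSS Q) (b : Q → ℤ) (α : Finset Q) : Set (Finset Q) :=
  {z | ∀ γ ∈ Zof (G C α), g b (γ ∩ α) ≡ 2 * ((z ∩ γ).card : ℤ) [ZMOD 4]}

/- Quantum setting -/

abbrev M (Q : Type*) [Fintype Q] [DecidableEq Q] :=
  Matrix (Q → ZMod 2) (Q → ZMod 2) ℂ

def supp (v : Q → ZMod 2) : Finset Q := Finset.univ.filter (fun q => v q = 1)

def ind (α : Finset Q) : Q → ZMod 2 := fun q => if q ∈ α then 1 else 0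

def XM (α : Finset Q) : M Q :=
  Matrix.of fun u v => if u = v + ind α then (1 : ℂ) else 0

noncomputable def ZM (α : Finset Q) : M Q :=
  Matrix.diagonal fun v => (-1 : ℂ) ^ (supp v ∩ α).card

noncomputable def AM (b : Q → ℤ) (α : Finset Q) : M Q :=
  Matrix.diagonal fun v => Complex.I ^ (g b (α ∩ supp v))

noncomputable def UM (b : Q → ℤ) : M Q :=
  Matrix.diagonal fun v => Complex.exp (Real.pi * Complex.I / 4) ^ (g b (supp v))

def Encoded (C : CSS Q) (ρ : M Q) : Prop :=
  ρ.trace = 1 ∧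
  (∀ c ∈ C.SX, XM c * ρ = ρ ∧ ρ * XM c = ρ) ∧
  (∀ f ∈ C.SZ, ZM f * ρ = ρ ∧ ρ * ZM f = ρ)

instance : Std.Commutative (α := Finset Q) (· ∆ ·) := ⟨symmDiff_comm⟩
instance : Std.Associative (α := Finset Q) (· ∆ ·) := ⟨symmDiff_assoc⟩

/-- Iterated symmetric difference over a finite index set. -/
def bigΔ {ι : Type*} (s : Finset ι) (f : ι → Finset Q) : Finset Q :=
  s.fold (· ∆ ·) ∅ f


section Lemma2Aux

set_option linter.unusedSectionVars false

/-! ### `ZMod 2` indicator infrastructure -/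

lemma zmod2_cases (c : ZMod 2) : c = 0 ∨ c = 1 := by revert c; decide

/-- Indicator function of a finset, valued in `ZMod 2`. -/
def ee (a : Finset Q) : Q → ZMod 2 := fun q => if q ∈ a then 1 else 0

lemma ee_inj : Function.Injective (ee (Q := Q)) := by
  intro a b h
  ext q
  have := congrFun h q
  simp only [ee] at this
  by_cases ha : q ∈ a <;> by_cases hb : q ∈ b
  · simp [ha, hb]
  · simp only [ha, hb, if_true, if_false] at this; exact absurd this (by decide)
  · simp only [ha, hb, if_true, if_false] at this; exact absurd this (by decide)
  · simp [ha, hb]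

lemma ee_surj : Function.Surjective (ee (Q := Q)) := by
  intro x
  refine ⟨Finset.univ.filter (fun q => x q = 1), ?_⟩
  ext q
  simp only [ee, Finset.mem_filter, Finset.mem_univ, true_and]
  rcases zmod2_cases (x q) with h | h <;> simp [h]

lemma ee_empty : ee (∅ : Finset Q) = 0 := by ext q; simp [ee]

lemma ee_symmDiff (a b : Finset Q) : ee (a ∆ b) = ee a + ee b := by
  ext q
  simp only [ee, Pi.add_apply, Finset.mem_symmDiff]
  by_cases ha : q ∈ a <;> by_cases hb : q ∈ b <;> simp [ha, hb] <;> decide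

lemma ee_inter (a b : Finset Q) : ee (a ∩ b) = ee a * ee b := by
  ext q
  simp only [ee, Pi.mul_apply, Finset.mem_inter]
  by_cases ha : q ∈ a <;> by_cases hb : q ∈ b <;> simp [ha, hb]

lemma dot_ee (a b : Finset Q) : ee a ⬝ᵥ ee b = (((a ∩ b).card : ℕ) : ZMod 2) := by
  have h : ∀ q, ee a q * ee b q = if q ∈ a ∩ b then (1 : ZMod 2) else 0 := by
    intro q
    simp only [ee, Finset.mem_inter]
    by_cases ha : q ∈ a <;> by_cases hb : q ∈ b <;> simp [ha, hb]
  rw [dotProduct]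
  rw [Finset.sum_congr rfl fun q _ => h q, Finset.sum_boole]
  congr 2
  ext q; simp

lemma even_inter_iff {a b : Finset Q} : 2 ∣ (a ∩ b).card ↔ ee a ⬝ᵥ ee b = 0 := by
  rw [dot_ee, ZMod.natCast_eq_zero_iff]

/-! ### closure API -/

lemma subset_closure (T : Set (Finset Q)) : T ⊆ closure T :=
  fun _ ha _ hS => hS.2 ha

lemma closure_le {T S : Set (Finset Q)} (hS : IsSubgroup S) (h : T ⊆ S) : closure T ⊆ S :=
  fun _ ha => ha S ⟨hS, h⟩

lemma isSubgroup_closure (T : Set (Finset Q)) : IsSubgroup (closure T) := by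
  constructor
  · exact fun S hS => hS.1.1
  · intro a ha b hb S hS
    exact hS.1.2 a (ha S hS) b (hb S hS)

/-! ### subgroups as submodules -/

/-- A `∆`-subgroup of `Finset Q` as a `ZMod 2`-submodule of `Q → ZMod 2`. -/
def toSub (S : Set (Finset Q)) (hS : IsSubgroup S) : Submodule (ZMod 2) (Q → ZMod 2) where
  carrier := ee '' S
  add_mem' := by
    rintro x y ⟨a, ha, rfl⟩ ⟨b, hb, rfl⟩
    exact ⟨a ∆ b, hS.2 a ha b hb, ee_symmDiff a b⟩
  zero_mem' := ⟨∅, hS.1, ee_empty⟩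
  smul_mem' := by
    intro c x hx
    rcases zmod2_cases c with rfl | rfl
    · rw [zero_smul]; exact ⟨∅, hS.1, ee_empty⟩
    · rw [one_smul]; exact hx

lemma mem_toSub {S : Set (Finset Q)} {hS : IsSubgroup S} {a : Finset Q} :
    ee a ∈ toSub S hS ↔ a ∈ S := by
  constructor
  · rintro ⟨b, hb, hba⟩; rwa [← ee_inj hba]
  · exact fun h => ⟨a, h, rfl⟩

/-! ### basic code lemmas -/

variable {C : CSS Q}

lemma empty_mem_ZX : (∅ : Finset Q) ∈ ZX C := fun f _ => by simp

lemma empty_mem_ZZ : (∅ : Finset Q) ∈ ZZ C := fun f _ => by simp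

lemma symmDiff_mem_ZX {a b : Finset Q} (ha : a ∈ ZX C) (hb : b ∈ ZX C) : a ∆ b ∈ ZX C := by
  intro f hf
  have ha' := even_inter_iff.1 (ha f hf)
  have hb' := even_inter_iff.1 (hb f hf)
  rw [even_inter_iff, ee_symmDiff, add_dotProduct, ha', hb', add_zero]

lemma symmDiff_mem_ZZ {a b : Finset Q} (ha : a ∈ ZZ C) (hb : b ∈ ZZ C) : a ∆ b ∈ ZZ C := by
  intro f hf
  have ha' := even_inter_iff.1 (ha f hf)
  have hb' := even_inter_iff.1 (hb f hf)
  rw [even_inter_iff, ee_symmDiff, add_dotProduct, ha', hb', add_zero]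

lemma isSubgroup_ZX (C : CSS Q) : IsSubgroup (ZX C) :=
  ⟨empty_mem_ZX, fun _ ha _ hb => symmDiff_mem_ZX ha hb⟩

lemma isSubgroup_ZZ (C : CSS Q) : IsSubgroup (ZZ C) :=
  ⟨empty_mem_ZZ, fun _ ha _ hb => symmDiff_mem_ZZ ha hb⟩

lemma SX_subset_ZX (C : CSS Q) : C.SX ⊆ ZX C := by
  intro b hb f hf
  have := C.comm f hf b hb
  rwa [Finset.inter_comm] at this

lemma SZ_subset_ZZ (C : CSS Q) : C.SZ ⊆ ZZ C := fun a ha c hc => C.comm a ha c hc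

lemma mem_SZ_iff (hdual : Dual C) {a : Finset Q} :
    a ∈ C.SZ ↔ ∀ γ ∈ ZX C, 2 ∣ (a ∩ γ).card :=
  Set.ext_iff.mp hdual.1 a

lemma mem_SX_iff (hdual : Dual C) {a : Finset Q} :
    a ∈ C.SX ↔ ∀ z ∈ ZZ C, 2 ∣ (a ∩ z).card :=
  Set.ext_iff.mp hdual.2 a

lemma inter_mem_ZZ (hinter : Inter C) {γ δ : Finset Q} (hγ : γ ∈ ZX C) (hδ : δ ∈ ZX C) :
    γ ∩ δ ∈ ZZ C := by
  rw [hinter]; exact ⟨γ, hγ, δ, hδ, rfl⟩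

lemma exists_logicalX (hsingle : SingleQubit C) : ∃ l, LogicalX C l := by
  obtain ⟨l, hl, hl'⟩ :=
    Set.exists_of_ssubset (HasSubset.Subset.ssubset_of_ne (SX_subset_ZX C) (Ne.symm hsingle.1.1))
  exact ⟨l, hl, hl'⟩

lemma exists_logicalZ (hsingle : SingleQubit C) : ∃ z, LogicalZ C z := by
  obtain ⟨z, hz, hz'⟩ :=
    Set.exists_of_ssubset (HasSubset.Subset.ssubset_of_ne (SZ_subset_ZZ C) (Ne.symm hsingle.2.1))
  exact ⟨z, hz, hz'⟩

lemma sx_inter_zx_mem_SZ (hdual : Dual C) (hinter : Inter C) {β γ : Finset Q}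
    (hβ : β ∈ C.SX) (hγ : γ ∈ ZX C) : β ∩ γ ∈ C.SZ := by
  rw [mem_SZ_iff hdual]
  intro μ hμ
  have h2 := inter_mem_ZZ hinter hγ hμ β hβ
  rwa [show (γ ∩ μ) ∩ β = (β ∩ γ) ∩ μ from by
    ext q; simp only [Finset.mem_inter]; tauto] at h2

lemma odd_logical_pair (hdual : Dual C) (hsingle : SingleQubit C) {z l : Finset Q}
    (hz : z ∈ ZZ C) (hz' : z ∉ C.SZ) (hl : LogicalX C l) : ¬ 2 ∣ (z ∩ l).card := by
  rw [mem_SZ_iff hdual] at hz'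
  push_neg at hz'
  obtain ⟨γ, hγ, hodd⟩ := hz'
  have hγX : γ ∉ C.SX := fun hγX => hodd (hz γ hγX)
  have hSX : l ∆ γ ∈ C.SX := hsingle.1.2 l γ hl ⟨hγ, hγX⟩
  have heven := even_inter_iff.1 (hz _ hSX)
  rw [ee_symmDiff, dotProduct_add] at heven
  intro h
  apply hodd
  rw [even_inter_iff] at h ⊢
  rw [h, zero_add] at heven
  exact heven

lemma even_congr (hsingle : SingleQubit C) {a a' m : Finset Q} (hm : m ∈ ZZ C)
    (h : a ∆ a' ∈ C.SX) : (2 ∣ (a ∩ m).card ↔ 2 ∣ (a' ∩ m).card) := by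
  have he : ee m ⬝ᵥ ee (a ∆ a') = 0 := by
    rw [← even_inter_iff]; exact hm _ h
  rw [dotProduct_comm, ee_symmDiff, add_dotProduct] at he
  rw [even_inter_iff, even_inter_iff]
  constructor
  · intro h'; rw [h', zero_add] at he; exact he
  · intro h'; rw [h', add_zero] at he; exact he

lemma odd_triple (hdual : Dual C) (hsingle : SingleQubit C) (hinter : Inter C)
    {l1 l2 l3 : Finset Q} (h1 : LogicalX C l1) (h2 : LogicalX C l2) (h3 : LogicalX C l3) :
    ¬ 2 ∣ (l1 ∩ (l2 ∩ l3)).card := by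
  obtain ⟨z0, hz0⟩ := exists_logicalZ hsingle
  have hz0' := hz0.1
  rw [hinter] at hz0'
  obtain ⟨γ, hγ, δ, hδ, rfl⟩ := hz0'
  have hns := hz0.2
  rw [mem_SZ_iff hdual] at hns
  push_neg at hns
  obtain ⟨μ, hμ, hodd⟩ := hns
  have hμX : μ ∉ C.SX := fun h => hodd (hz0.1 μ h)
  have hγX : γ ∉ C.SX := by
    intro h
    apply hodd
    have := inter_mem_ZZ hinter hδ hμ γ h
    rwa [show (δ ∩ μ) ∩ γ = (γ ∩ δ) ∩ μ from by
      ext q; simp only [Finset.mem_inter]; tauto] at this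
  have hδX : δ ∉ C.SX := by
    intro h
    apply hodd
    have := inter_mem_ZZ hinter hγ hμ δ h
    rwa [show (γ ∩ μ) ∩ δ = (γ ∩ δ) ∩ μ from by
      ext q; simp only [Finset.mem_inter]; tauto] at this
  -- replace l1 by γ
  have s1 : (2 ∣ (l1 ∩ (l2 ∩ l3)).card ↔ 2 ∣ (γ ∩ (l2 ∩ l3)).card) :=
    even_congr hsingle (inter_mem_ZZ hinter h2.1 h3.1) (hsingle.1.2 l1 γ h1 ⟨hγ, hγX⟩)
  -- replace l2 by δ
  have s2 : (2 ∣ (l2 ∩ (γ ∩ l3)).card ↔ 2 ∣ (δ ∩ (γ ∩ l3)).card) :=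
    even_congr hsingle (inter_mem_ZZ hinter hγ h3.1) (hsingle.1.2 l2 δ h2 ⟨hδ, hδX⟩)
  -- replace l3 by μ
  have s3 : (2 ∣ (l3 ∩ (γ ∩ δ)).card ↔ 2 ∣ (μ ∩ (γ ∩ δ)).card) :=
    even_congr hsingle (inter_mem_ZZ hinter hγ hδ) (hsingle.1.2 l3 μ h3 ⟨hμ, hμX⟩)
  intro hc
  apply hodd
  have c1 := s1.1 hc
  rw [show γ ∩ (l2 ∩ l3) = l2 ∩ (γ ∩ l3) from by
    ext q; simp only [Finset.mem_inter]; tauto] at c1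
  have c2 := s2.1 c1
  rw [show δ ∩ (γ ∩ l3) = l3 ∩ (γ ∩ δ) from by
    ext q; simp only [Finset.mem_inter]; tauto] at c2
  have c3 := s3.1 c2
  rwa [show μ ∩ (γ ∩ δ) = (γ ∩ δ) ∩ μ from by
    ext q; simp only [Finset.mem_inter]; tauto] at c3

lemma logicalZ_odd (hdual : Dual C) (hsingle : SingleQubit C) (hinter : Inter C)
    {z : Finset Q} (hz : LogicalZ C z) : ¬ 2 ∣ z.card := by
  have hz1 := hz.1
  rw [hinter] at hz1
  obtain ⟨γ, hγ, δ, hδ, rfl⟩ := hz1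
  have hns := hz.2
  rw [mem_SZ_iff hdual] at hns
  push_neg at hns
  obtain ⟨μ, hμ, hodd⟩ := hns
  have hμX : μ ∉ C.SX := fun h => hodd (hz.1 μ h)
  have hγX : γ ∉ C.SX := by
    intro h
    apply hodd
    have := inter_mem_ZZ hinter hδ hμ γ h
    rwa [show (δ ∩ μ) ∩ γ = (γ ∩ δ) ∩ μ from by
      ext q; simp only [Finset.mem_inter]; tauto] at this
  have hδX : δ ∉ C.SX := by
    intro h
    apply hodd
    have := inter_mem_ZZ hinter hγ hμ δ h
    rwa [show (γ ∩ μ) ∩ δ = (γ ∩ δ) ∩ μ from by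
      ext q; simp only [Finset.mem_inter]; tauto] at this
  have h3 := odd_triple hdual hsingle hinter
    (⟨hγ, hγX⟩ : LogicalX C γ) (⟨hδ, hδX⟩ : LogicalX C δ) (⟨hγ, hγX⟩ : LogicalX C γ)
  rw [show γ ∩ (δ ∩ γ) = γ ∩ δ from by
    ext q; simp only [Finset.mem_inter]; tauto] at h3
  intro hc
  exact h3 hc

/-! ### G and H membership -/

lemma mem_G_iff {α z : Finset Q} :
    z ∈ G C α ↔ ∃ s ∈ C.SZ, ∃ β ∈ ZX C, z = s ∆ (α ∩ β) := by
  constructor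
  · intro hz
    refine closure_le (S := {z | ∃ s ∈ C.SZ, ∃ β ∈ ZX C, z = s ∆ (α ∩ β)}) ?_ ?_ hz
    · constructor
      · exact ⟨∅, C.hSZ.1, ∅, empty_mem_ZX, by
          ext q; simp [Finset.mem_symmDiff]⟩
      · rintro a ⟨s, hs, β, hβ, rfl⟩ b ⟨s', hs', β', hβ', rfl⟩
        refine ⟨s ∆ s', C.hSZ.2 s hs s' hs', β ∆ β', symmDiff_mem_ZX hβ hβ', ?_⟩
        apply ee_inj
        simp only [ee_symmDiff, ee_inter]
        ring
    · apply Set.union_subset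
      · exact fun s hs => ⟨s, hs, ∅, empty_mem_ZX, by
          ext q; simp [Finset.mem_symmDiff]⟩
      · rintro x ⟨β, hβ, rfl⟩
        exact ⟨∅, C.hSZ.1, β, hβ, by ext q; simp [Finset.mem_symmDiff]⟩
  · rintro ⟨s, hs, β, hβ, rfl⟩
    have h1 : s ∈ G C α := subset_closure _ (Or.inl hs)
    have h2 : α ∩ β ∈ G C α := subset_closure _ (Or.inr ⟨β, hβ, rfl⟩)
    exact (isSubgroup_closure _).2 _ h1 _ h2

lemma mem_H_iff {α z : Finset Q} :
    z ∈ H C α ↔ ∃ s ∈ C.SZ, ∃ β ∈ C.SX, z = s ∆ (α ∩ β) := by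
  constructor
  · intro hz
    refine closure_le (S := {z | ∃ s ∈ C.SZ, ∃ β ∈ C.SX, z = s ∆ (α ∩ β)}) ?_ ?_ hz
    · constructor
      · exact ⟨∅, C.hSZ.1, ∅, C.hSX.1, by
          ext q; simp [Finset.mem_symmDiff]⟩
      · rintro a ⟨s, hs, β, hβ, rfl⟩ b ⟨s', hs', β', hβ', rfl⟩
        refine ⟨s ∆ s', C.hSZ.2 s hs s' hs', β ∆ β', C.hSX.2 β hβ β' hβ', ?_⟩
        apply ee_inj
        simp only [ee_symmDiff, ee_inter]
        ring
    · apply Set.union_subset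
      · exact fun s hs => ⟨s, hs, ∅, C.hSX.1, by
          ext q; simp [Finset.mem_symmDiff]⟩
      · rintro x ⟨β, hβ, rfl⟩
        exact ⟨∅, C.hSZ.1, β, hβ, by ext q; simp [Finset.mem_symmDiff]⟩
  · rintro ⟨s, hs, β, hβ, rfl⟩
    have h1 : s ∈ H C α := subset_closure _ (Or.inl hs)
    have h2 : α ∩ β ∈ H C α := subset_closure _ (Or.inr ⟨β, hβ, rfl⟩)
    exact (isSubgroup_closure _).2 _ h1 _ h2

lemma star_iff {α : Finset Q} :
    Tolerable C α ↔ ∀ β ∈ ZX C, α ∩ β ∈ ZZ C → α ∩ β ∈ C.SZ := by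
  constructor
  · intro h β hβ hzz
    have hg : α ∩ β ∈ G C α := subset_closure _ (Or.inr ⟨β, hβ, rfl⟩)
    by_contra hns
    exact h _ hg ⟨hzz, hns⟩
  · rintro h z hz ⟨hzz, hns⟩
    rw [mem_G_iff] at hz
    obtain ⟨s, hs, β, hβ, rfl⟩ := hz
    have h1 : α ∩ β ∈ ZZ C := by
      have he : α ∩ β = s ∆ (s ∆ (α ∩ β)) := (symmDiff_symmDiff_cancel_left s _).symm
      rw [he]
      exact symmDiff_mem_ZZ (SZ_subset_ZZ C hs) hzz
    exact hns (C.hSZ.2 s hs _ (h β hβ h1))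

/-! ### implications -/

lemma tol_of_inter (hdual : Dual C) (hsingle : SingleQubit C) {α l : Finset Q}
    (hl : LogicalX C l) (hsz : α ∩ l ∈ C.SZ) : Tolerable C α := by
  rw [star_iff]
  intro β hβ hzz
  by_contra hns
  apply odd_logical_pair hdual hsingle hzz hns hl
  rw [show (α ∩ β) ∩ l = (α ∩ l) ∩ β from by
    ext q; simp only [Finset.mem_inter]; tauto]
  have h := hβ _ hsz
  rwa [Finset.inter_comm] at h

lemma inter_mem_SZ_of_Zof (hdual : Dual C) {α l : Finset Q}
    (hl : LogicalX C l) (hzof : l ∈ Zof (G C α)) : α ∩ l ∈ C.SZ := by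
  rw [mem_SZ_iff hdual]
  intro β hβ
  have hg : α ∩ β ∈ G C α := subset_closure _ (Or.inr ⟨β, hβ, rfl⟩)
  have h := hzof _ hg
  rwa [show l ∩ (α ∩ β) = (α ∩ l) ∩ β from by
    ext q; simp only [Finset.mem_inter]; tauto] at h

lemma zof_of_inter {α l : Finset Q} (hl : LogicalX C l) (hsz : α ∩ l ∈ C.SZ) :
    l ∈ Zof (G C α) := by
  intro h hh
  rw [mem_G_iff] at hh
  obtain ⟨s, hs, β, hβ, rfl⟩ := hh
  rw [even_inter_iff, ee_symmDiff, dotProduct_add]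
  have e1 : ee l ⬝ᵥ ee s = 0 := even_inter_iff.1 (hl.1 s hs)
  have e2 : ee l ⬝ᵥ ee (α ∩ β) = 0 := by
    rw [← even_inter_iff]
    have h2 := hβ _ hsz
    rwa [show β ∩ (α ∩ l) = l ∩ (α ∩ β) from by
      ext q; simp only [Finset.mem_inter]; tauto] at h2
  rw [e1, e2, add_zero]

lemma H_subset_G {α : Finset Q} : H C α ⊆ G C α := by
  apply closure_le (isSubgroup_closure _)
  apply Set.union_subset
  · exact fun s hs => subset_closure _ (Or.inl hs)
  · rintro x ⟨β, hβ, rfl⟩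
    exact subset_closure _ (Or.inr ⟨β, SX_subset_ZX C hβ, rfl⟩)

lemma G_subset_H (hsingle : SingleQubit C) {α l : Finset Q}
    (hl : LogicalX C l) (hsz : α ∩ l ∈ C.SZ) : G C α ⊆ H C α := by
  apply closure_le (isSubgroup_closure _)
  apply Set.union_subset
  · exact fun s hs => subset_closure _ (Or.inl hs)
  · rintro x ⟨β, hβ, rfl⟩
    by_cases hb : β ∈ C.SX
    · exact subset_closure _ (Or.inr ⟨β, hb, rfl⟩)
    · have hc : β ∆ l ∈ C.SX := hsingle.1.2 β l ⟨hβ, hb⟩ hl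
      have h1 : α ∩ (β ∆ l) ∈ H C α := subset_closure _ (Or.inr ⟨_, hc, rfl⟩)
      have h2 : α ∩ l ∈ H C α := subset_closure _ (Or.inl hsz)
      have h3 := (isSubgroup_closure _).2 _ h1 _ h2
      rwa [show (α ∩ (β ∆ l)) ∆ (α ∩ l) = α ∩ β from by
        ext q; simp only [Finset.mem_symmDiff, Finset.mem_inter]; tauto] at h3

lemma exists_of_HG (hdual : Dual C) (hsingle : SingleQubit C) {α : Finset Q}
    (hHG : H C α = G C α) : ∃ l, LogicalX C l ∧ α ∩ l ∈ C.SZ := by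
  obtain ⟨l₀, hl₀⟩ := exists_logicalX hsingle
  have hg : α ∩ l₀ ∈ G C α := subset_closure _ (Or.inr ⟨l₀, hl₀.1, rfl⟩)
  rw [← hHG, mem_H_iff] at hg
  obtain ⟨s, hs, c, hc, heq⟩ := hg
  refine ⟨l₀ ∆ c, ⟨symmDiff_mem_ZX hl₀.1 (SX_subset_ZX C hc), ?_⟩, ?_⟩
  · intro hmem
    apply hl₀.2
    have h := C.hSX.2 _ hmem _ hc
    rwa [symmDiff_symmDiff_cancel_right] at h
  · have hd : α ∩ (l₀ ∆ c) = (α ∩ l₀) ∆ (α ∩ c) := by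
      ext q; simp only [Finset.mem_symmDiff, Finset.mem_inter]; tauto
    rw [hd, heq, symmDiff_symmDiff_cancel_right]
    exact hs

lemma not_tol_symmDiff (hdual : Dual C) (hsingle : SingleQubit C) (hinter : Inter C)
    {α l l₀ : Finset Q} (hl : LogicalX C l) (hl₀ : LogicalX C l₀)
    (hsz : α ∩ l₀ ∈ C.SZ) : ¬ Tolerable C (α ∆ l) := by
  rw [star_iff]
  intro h
  have hd : (α ∆ l) ∩ l₀ = (α ∩ l₀) ∆ (l ∩ l₀) := by
    ext q; simp only [Finset.mem_symmDiff, Finset.mem_inter]; tauto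
  have h1 : (α ∆ l) ∩ l₀ ∈ ZZ C := by
    rw [hd]
    exact symmDiff_mem_ZZ (SZ_subset_ZZ C hsz) (inter_mem_ZZ hinter hl.1 hl₀.1)
  have h2 := h _ hl₀.1 h1
  have h3 : l ∩ l₀ ∈ C.SZ := by
    have he : l ∩ l₀ = (α ∩ l₀) ∆ ((α ∆ l) ∩ l₀) := by
      rw [hd, symmDiff_symmDiff_cancel_left]
    rw [he]
    exact C.hSZ.2 _ hsz _ h2
  apply odd_triple hdual hsingle hinter hl hl₀ hl
  have h4 := (mem_SZ_iff hdual).1 h3 l hl.1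
  rwa [show (l ∩ l₀) ∩ l = l ∩ (l₀ ∩ l) from by
    ext q; simp only [Finset.mem_inter]; tauto] at h4

lemma exists_tol_of_not_tol (hdual : Dual C) (hsingle : SingleQubit C) (hinter : Inter C)
    {α : Finset Q} (h : ¬ Tolerable C α) : ∃ l, LogicalX C l ∧ Tolerable C (α ∆ l) := by
  rw [star_iff] at h
  push_neg at h
  obtain ⟨β, hβ, hzz, hns⟩ := h
  have hβX : β ∉ C.SX := by
    intro hβX
    have heven := hzz β hβX
    rw [show (α ∩ β) ∩ β = α ∩ β from by
      ext q; simp only [Finset.mem_inter]; tauto] at heven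
    exact logicalZ_odd hdual hsingle hinter ⟨hzz, hns⟩ heven
  have hβZZ : β ∈ ZZ C := by
    have h := inter_mem_ZZ hinter hβ hβ
    rwa [Finset.inter_self] at h
  have hβSZ : β ∉ C.SZ := by
    intro hmem
    have h1 := (mem_SZ_iff hdual).1 hmem β hβ
    rw [Finset.inter_self] at h1
    have hodd := odd_triple hdual hsingle hinter
      (⟨hβ, hβX⟩ : LogicalX C β) (⟨hβ, hβX⟩ : LogicalX C β) (⟨hβ, hβX⟩ : LogicalX C β)
    rw [Finset.inter_self, Finset.inter_self] at hodd
    exact hodd h1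
  have hkey : (α ∩ β) ∆ β ∈ C.SZ := hsingle.2.2 _ _ ⟨hzz, hns⟩ ⟨hβZZ, hβSZ⟩
  refine ⟨β, ⟨hβ, hβX⟩, ?_⟩
  apply tol_of_inter hdual hsingle (⟨hβ, hβX⟩ : LogicalX C β)
  rwa [show (α ∆ β) ∩ β = (α ∩ β) ∆ β from by
    ext q; simp only [Finset.mem_symmDiff, Finset.mem_inter]; tauto]

lemma tol_symmDiff_sx (hdual : Dual C) (hinter : Inter C) {α : Finset Q}
    (h : Tolerable C α) {β : Finset Q} (hβ : β ∈ C.SX) : Tolerable C (α ∆ β) := by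
  rw [star_iff] at h ⊢
  intro γ hγ hzz
  have hd : (α ∆ β) ∩ γ = (α ∩ γ) ∆ (β ∩ γ) := by
    ext q; simp only [Finset.mem_symmDiff, Finset.mem_inter]; tauto
  have hβγ : β ∩ γ ∈ C.SZ := sx_inter_zx_mem_SZ hdual hinter hβ hγ
  have hαγ : α ∩ γ ∈ ZZ C := by
    have he : α ∩ γ = ((α ∆ β) ∩ γ) ∆ (β ∩ γ) := by
      rw [hd, symmDiff_symmDiff_cancel_right]
    rw [he]
    exact symmDiff_mem_ZZ hzz (SZ_subset_ZZ C hβγ)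
  have h2 := h γ hγ hαγ
  rw [hd]
  exact C.hSZ.2 _ h2 _ hβγ

/-! ### the crux: tolerability gives a logical X in `Zof (G C α)` -/

lemma crux (hdual : Dual C) (hsingle : SingleQubit C) (hinter : Inter C) {α : Finset Q}
    (htol : Tolerable C α) : ∃ l, LogicalX C l ∧ l ∈ Zof (G C α) := by
  classical
  let B : LinearMap.BilinForm (ZMod 2) (Q → ZMod 2) :=
    LinearMap.mk₂ (ZMod 2) (fun x y => x ⬝ᵥ y)
      (fun x x' y => add_dotProduct x x' y)
      (fun c x y => smul_dotProduct c x y)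
      (fun x y y' => dotProduct_add x y y')
      (fun c x y => dotProduct_smul c x y)
  have hBapp : ∀ x y : Q → ZMod 2, B x y = x ⬝ᵥ y := fun x y => rfl
  have hrefl : B.IsRefl := by
    intro x y hxy
    rw [hBapp] at hxy ⊢
    rwa [dotProduct_comm]
  have hnd : B.Nondegenerate := by
    refine (LinearMap.IsRefl.nondegenerate_iff_separatingLeft hrefl).2 ?_
    intro x hx
    funext q
    have h := hx (Pi.single q 1)
    rw [hBapp, dotProduct_single, mul_one] at h
    exact h
  have hZZsub : IsSubgroup (ZZ C) := isSubgroup_ZZ C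
  have hGsub : IsSubgroup (G C α) := isSubgroup_closure _
  set sz : Submodule (ZMod 2) (Q → ZMod 2) := toSub C.SZ C.hSZ with hsz_def
  set sx : Submodule (ZMod 2) (Q → ZMod 2) := toSub C.SX C.hSX with hsx_def
  set zz : Submodule (ZMod 2) (Q → ZMod 2) := toSub (ZZ C) hZZsub with hzz_def
  set gg : Submodule (ZMod 2) (Q → ZMod 2) := toSub (G C α) hGsub with hgg_def
  -- orthogonality descriptions
  have hortho : ∀ (S : Set (Finset Q)) (hS : IsSubgroup S) (a : Finset Q),
      (ee a ∈ B.orthogonal (toSub S hS) ↔ ∀ s ∈ S, 2 ∣ (a ∩ s).card) := by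
    intro S hS a
    rw [LinearMap.BilinForm.mem_orthogonal_iff]
    constructor
    · intro h s hs
      have h2 := h (ee s) ⟨s, hs, rfl⟩
      rw [hBapp, dotProduct_comm] at h2
      rwa [even_inter_iff]
    · rintro h n ⟨s, hs, rfl⟩
      rw [hBapp, dotProduct_comm]
      rw [← even_inter_iff]
      exact h s hs
  -- the tolerable inclusion
  have h1 : gg ⊓ zz ≤ sz := by
    rintro x ⟨hx1, hx2⟩
    obtain ⟨z, hzG, rfl⟩ := hx1
    have hzZZ : z ∈ ZZ C := mem_toSub.1 hx2
    have hzSZ : z ∈ C.SZ := by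
      by_contra hns
      exact htol z hzG ⟨hzZZ, hns⟩
    exact mem_toSub.2 hzSZ
  -- sz ≤ gg
  have hszgg : sz ≤ gg := by
    rintro x ⟨s, hs, rfl⟩
    exact ⟨s, subset_closure _ (Or.inl hs), rfl⟩
  -- sx = orthogonal of zz
  have hsxzz : sx = B.orthogonal zz := by
    apply le_antisymm
    · rintro x ⟨c, hc, rfl⟩
      rw [hortho]
      intro s hs
      exact (mem_SX_iff hdual).1 hc s hs
    · intro x hx
      obtain ⟨a, rfl⟩ := ee_surj x
      rw [hortho] at hx
      exact mem_toSub.2 ((mem_SX_iff hdual).2 hx)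
  -- zx = orthogonal of sz
  have hzxsz : ∀ a : Finset Q, a ∈ ZX C ↔ ee a ∈ B.orthogonal sz := by
    intro a
    rw [hortho]
    exact Iff.rfl
  -- orthogonal of sup is inf of orthogonals
  have hinf : ∀ U W : Submodule (ZMod 2) (Q → ZMod 2),
      B.orthogonal (U ⊔ W) = B.orthogonal U ⊓ B.orthogonal W := by
    intro U W
    apply le_antisymm
    · exact le_inf (LinearMap.BilinForm.orthogonal_le le_sup_left)
        (LinearMap.BilinForm.orthogonal_le le_sup_right)
    · intro x hx
      rw [LinearMap.BilinForm.mem_orthogonal_iff]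
      intro n hn
      obtain ⟨u, hu, w, hw, rfl⟩ := Submodule.mem_sup.1 hn
      have h1 := hx.1 u hu
      have h2 := hx.2 w hw
      rw [map_add, LinearMap.add_apply, h1, h2, add_zero]
  -- key: orthogonal of inf is sup of orthogonals
  have hkey : B.orthogonal (gg ⊓ zz) = B.orthogonal gg ⊔ B.orthogonal zz := by
    have he : gg ⊓ zz = B.orthogonal (B.orthogonal gg ⊔ B.orthogonal zz) := by
      rw [hinf, LinearMap.BilinForm.orthogonal_orthogonal hnd hrefl,
        LinearMap.BilinForm.orthogonal_orthogonal hnd hrefl]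
    rw [he, LinearMap.BilinForm.orthogonal_orthogonal hnd hrefl]
  -- assemble
  obtain ⟨l₀, hl₀⟩ := exists_logicalX hsingle
  have hchain : B.orthogonal sz ≤ B.orthogonal gg ⊔ sx := by
    rw [hsxzz, ← hkey]
    exact LinearMap.BilinForm.orthogonal_le h1
  have hmem : ee l₀ ∈ B.orthogonal gg ⊔ sx := hchain ((hzxsz l₀).1 hl₀.1)
  rw [Submodule.mem_sup] at hmem
  obtain ⟨y, hy, zc, hzc, heq⟩ := hmem
  obtain ⟨c, hc, rfl⟩ := hzc
  have hneg : ∀ v : Q → ZMod 2, -v = v := by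
    intro v
    funext q
    rw [Pi.neg_apply]
    rcases zmod2_cases (v q) with h | h <;> rw [h] <;> decide
  have hyl : y = ee (l₀ ∆ c) := by
    have h0 : y = ee l₀ - ee c := by rw [← heq]; abel
    rw [h0, ee_symmDiff, sub_eq_add_neg, hneg]
  have hlZX : l₀ ∆ c ∈ ZX C := by
    rw [hzxsz, ← hyl]
    exact LinearMap.BilinForm.orthogonal_le hszgg hy
  have hlSX : l₀ ∆ c ∉ C.SX := by
    intro hmem2
    apply hl₀.2
    have h := C.hSX.2 _ hmem2 _ hc
    rwa [symmDiff_symmDiff_cancel_right] at h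
  refine ⟨l₀ ∆ c, ⟨hlZX, hlSX⟩, ?_⟩
  intro h hh
  have hhg : ee h ∈ gg := mem_toSub.2 hh
  have h0 := LinearMap.BilinForm.mem_orthogonal_iff.1 hy (ee h) hhg
  rw [hBapp] at h0
  rw [hyl] at h0
  rw [Finset.inter_comm, even_inter_iff]
  exact h0

end Lemma2Aux

/-- Lemma 2: characterizations of tolerable errors. -/
theorem tolerable_tfae
    (C : CSS Q) (hdual : Dual C) (hsingle : SingleQubit C) (hinter : Inter C)
    (α : Finset Q) :
    List.TFAE
      [Tolerable C α,
       H C α = G C α,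
       ∃ l, LogicalX C l ∧ α ∩ l ∈ C.SZ,
       ∃ l, LogicalX C l ∧ l ∈ Zof (G C α),
       ∀ l, LogicalX C l → ¬ Tolerable C (α ∆ l),
       ∀ β ∈ C.SX, Tolerable C (α ∆ β)] := by
  tfae_have 1 → 4 := fun h => crux hdual hsingle hinter h
  tfae_have 4 → 3 := by
    rintro ⟨l, hl, hz⟩
    exact ⟨l, hl, inter_mem_SZ_of_Zof hdual hl hz⟩
  tfae_have 3 → 4 := by
    rintro ⟨l, hl, hz⟩
    exact ⟨l, hl, zof_of_inter hl hz⟩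
  tfae_have 3 → 1 := by
    rintro ⟨l, hl, hz⟩
    exact tol_of_inter hdual hsingle hl hz
  tfae_have 3 → 2 := by
    rintro ⟨l, hl, hz⟩
    exact Set.Subset.antisymm H_subset_G (G_subset_H hsingle hl hz)
  tfae_have 2 → 3 := fun h => exists_of_HG hdual hsingle h
  tfae_have 3 → 5 := by
    rintro ⟨l₀, hl₀, hz⟩ l hl
    exact not_tol_symmDiff hdual hsingle hinter hl hl₀ hz
  tfae_have 5 → 1 := by
    intro h
    by_contra htol
    obtain ⟨l, hl, htl⟩ := exists_tol_of_not_tol hdual hsingle hinter htol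
    exact h l hl htl
  tfae_have 1 → 6 := fun h β hβ => tol_symmDiff_sx hdual hinter h hβ
  tfae_have 6 → 1 := by
    intro h
    have h2 := h ∅ C.hSX.1
    rwa [show α ∆ ∅ = α from by ext q; simp [Finset.mem_symmDiff]] at h2
  tfae_finish

end CC
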